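/- For all integers n ≥ 1 and 0 ≤ k ≤ n, the binomial sum identity ∑_{j=0}^{k} C(n,j) t^j = ∑_{i=0}^{k} C(n-k+i-1, i) t^i (1+t)^{k-i} holds as polynomials in t. -/

import Mathlib

open Polynomial Finset

/-- For `n ≥ 1` and `0 ≤ k ≤ n`,
`∑_{j=0}^{k} C(n,j) t^j = ∑_{i=0}^{k} C(n-k+i-1, i) t^i (1+t)^{k-i}` in `ℝ[t]`. -/
theorem binomial_sum_identity (n k : ℕ) (hn : 1 ≤ n) (hk : k ≤ n) :
    ∑ j ∈ Finset.range (k + 1), C ((n.choose j : ℝ)) * X ^ j =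
      ∑ i ∈ Finset.range (k + 1),
        C (((n - k + i - 1).choose i : ℝ)) * X ^ i * (1 + X) ^ (k - i) := by
  induction k with
  | zero => simp
  | succ k ih =>
    have IH := ih (Nat.le_of_succ_le hk)
    obtain ⟨m, rfl⟩ : ∃ m, n = m + (k + 1) := ⟨n - (k+1), by omega⟩
    have e1 : ∀ i, m + (k+1) - k + i - 1 = m + i := by intro i; omega
    have e2 : ∀ i, m + (k+1) - (k+1) + i - 1 = m + i - 1 := by intro i; omega
    simp only [e1] at IH
    simp only [e2]
    rw [Finset.sum_range_succ, IH]
    set B : ℝ[X] := ∑ i ∈ Finset.range (k+1),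
        C (((m+i).choose i : ℝ)) * X^i * (1+X)^(k-i) with hB
    have h1 : ∀ i ∈ Finset.range (k+2),
        (C (((m+i-1).choose i : ℝ)) * X^i * (1+X)^(k+1-i) : ℝ[X])
        = C (((m+i).choose i : ℝ)) * X^i * (1+X)^(k+1-i)
          - (if i = 0 then 0 else C (((m+i-1).choose (i-1) : ℝ)) * X^i * (1+X)^(k+1-i)) := by
      intro i _
      rcases i with _ | j
      · simp
      · have hp : (m+(j+1)).choose (j+1) = (m+j).choose j + (m+j).choose (j+1) := by
          rw [show m + (j+1) = (m+j) + 1 by ring]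
          exact Nat.choose_succ_succ _ _
        have hm : m + (j+1) - 1 = m + j := by omega
        simp only [hm, if_neg (Nat.succ_ne_zero j), hp]
        push_cast
        rw [C_add]
        ring
    have hA : ∑ i ∈ Finset.range (k+2),
        (C (((m+i).choose i : ℝ)) * X^i * (1+X)^(k+1-i) : ℝ[X])
        = B * (1+X) + C (((m+(k+1)).choose (k+1) : ℝ)) * X^(k+1) := by
      rw [Finset.sum_range_succ, Nat.sub_self, pow_zero, mul_one, hB, Finset.sum_mul]
      congr 1
      refine Finset.sum_congr rfl fun i hi => ?_
      simp only [Finset.mem_range] at hi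
      rw [show k+1-i = (k-i)+1 by omega, pow_succ]
      ring
    have hBsum : ∑ i ∈ Finset.range (k+2),
        (if i = 0 then (0:ℝ[X]) else C (((m+i-1).choose (i-1) : ℝ)) * X^i * (1+X)^(k+1-i))
        = B * X := by
      rw [Finset.sum_range_succ', if_pos rfl, add_zero, hB, Finset.sum_mul]
      refine Finset.sum_congr rfl fun j hj => ?_
      rw [if_neg (Nat.succ_ne_zero j), show m + (j+1) - 1 = m + j by omega,
        show k+1-(j+1) = k - j by omega]
      simp only [Nat.add_sub_cancel]
      ring
    rw [Finset.sum_congr rfl h1, Finset.sum_sub_distrib, hA, hBsum]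
    ring
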